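/- Let G be a simple graph with n vertices and F a field over which Z₃(G) is representable. Then for some m ≥ n there is an m×3n matrix P over F of the block form P = [[I, A, B],[0, 0, C]] such that: (1) P represents a matroid that shelters Z₃(G), with the columns of I, A and B corresponding to the φ, χ and ψ elements respectively; (2) I is the n×n identity matrix; and (3) A has nonzero entries in precisely the same positions where the adjacency matrix A(G) has nonzero entries. If moreover Z₃(G) is strictly representable over F, then P can be chosen satisfying additionally: (4) C = 0; (5) every diagonal entry of B equals 1; and (6) B_{vw}·B_{wv} = 1 whenever v and w are adjacent in G. -/

import Mathlib

set_option linter.unusedSectionVars false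
set_option maxHeartbeats 4000000


open Matrix

noncomputable section

/-- The rank over `F` of the set of columns of `M` indexed by `S`. -/
def colSpanRank (F : Type*) [Field F] {m n : Type*} (M : Matrix m n F) (S : Set n) : ℕ :=
  Module.finrank F ↥(Submodule.span F ((fun j i => M i j) '' S))

/-- A subtransversal of `W(G) = V × {φ,χ,ψ}`: at most one element of each triple. -/
def Subtransversal3 {V : Type*} (S : Set (V × Fin 3)) : Prop :=
  ∀ v i j, (v, i) ∈ S → (v, j) ∈ S → i = j

/-- The matrix `IAS(G) = (I | A | I + A)` over GF(2); the columns `(v,0)`, `(v,1)`,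
`(v,2)` are `φ_G(v)`, `χ_G(v)`, `ψ_G(v)` respectively. -/
def IASmat {V : Type*} [DecidableEq V] (A : Matrix V V (ZMod 2)) :
    Matrix V (V × Fin 3) (ZMod 2) :=
  Matrix.of fun v p =>
    if p.2 = 0 then (if v = p.1 then 1 else 0)
    else if p.2 = 1 then A v p.1
    else (if v = p.1 then 1 else 0) + A v p.1

/-- The isotropic 3-matroid `Z₃(G)` is representable over `F`: some matrix over `F`
with columns indexed by `W(G)` has the same rank as `IAS(G)` on every subtransversal. -/
def Z3Rep (F : Type*) [Field F] {V : Type*} [Fintype V] [DecidableEq V]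
    (A : Matrix V V (ZMod 2)) : Prop :=
  ∃ (k : ℕ) (P : Matrix (Fin k) (V × Fin 3) F),
    ∀ S : Set (V × Fin 3), Subtransversal3 S →
      colSpanRank F P S = colSpanRank (ZMod 2) (IASmat A) S

/-- `Z₃(G)` is strictly representable over `F`: the sheltering matroid has rank `|V(G)|`. -/
def Z3RepStrict (F : Type*) [Field F] {V : Type*} [Fintype V] [DecidableEq V]
    (A : Matrix V V (ZMod 2)) : Prop :=
  ∃ (k : ℕ) (P : Matrix (Fin k) (V × Fin 3) F),
    P.rank = Fintype.card V ∧
    ∀ S : Set (V × Fin 3), Subtransversal3 S →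
      colSpanRank F P S = colSpanRank (ZMod 2) (IASmat A) S



namespace Z3Aux

open Submodule Module

variable {K : Type} [Field K] {V : Type} [Fintype V] [DecidableEq V]

def phicol (K : Type) [Field K] {V : Type} [DecidableEq V] (w : V) : V → K :=
  fun v => if v = w then 1 else 0

lemma phicol_sum (f : V → K) : ∑ w, f w • phicol K w = f := by
  funext v
  simp only [Finset.sum_apply, Pi.smul_apply, phicol, smul_eq_mul, mul_ite, mul_one, mul_zero]
  simp

lemma mem_span_phicol {t : Set V} {f : V → K} (hf : ∀ v, v ∉ t → f v = 0) :
    f ∈ span K (phicol K '' t) := by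
  rw [← phicol_sum f]
  refine Submodule.sum_mem _ fun w _ => ?_
  by_cases hw : w ∈ t
  · exact Submodule.smul_mem _ _ (subset_span ⟨w, hw, rfl⟩)
  · rw [hf w hw, zero_smul]; exact zero_mem _

lemma finrank_ker_eq {W : Type} [AddCommGroup W] [Module K W] [FiniteDimensional K W]
    (L : (V → K) →ₗ[K] W) (hL : Function.Surjective L) :
    finrank K (LinearMap.ker L) + finrank K W = Fintype.card V := by
  have h := LinearMap.finrank_range_add_finrank_ker L
  rw [LinearMap.range_eq_top.mpr hL, finrank_top, Module.finrank_fintype_fun_eq_card] at h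
  omega

lemma proj_surjective (u : V) : Function.Surjective (LinearMap.proj u : (V → K) →ₗ[K] K) :=
  fun a => ⟨a • phicol K u, by simp [phicol]⟩

lemma proj2_surjective {u v : V} (huv : u ≠ v) :
    Function.Surjective ((LinearMap.proj u).prod (LinearMap.proj v) : (V → K) →ₗ[K] K × K) := by
  rintro ⟨a, b⟩
  refine ⟨a • phicol K u + b • phicol K v, ?_⟩
  simp [phicol, huv, huv.symm]

lemma projsum_surjective {u v : V} (huv : u ≠ v) :
    Function.Surjective ((LinearMap.proj u : (V → K) →ₗ[K] K) + (LinearMap.proj v : (V → K) →ₗ[K] K)) := by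
  intro a
  refine ⟨a • phicol K u, ?_⟩
  simp [phicol, huv.symm]


variable (A : Matrix V V (ZMod 2))

def chicol (u : V) : V → ZMod 2 := fun v => A v u

def psicol (u : V) : V → ZMod 2 := phicol (ZMod 2) u + chicol A u

lemma zmod_ne_zero {a : ZMod 2} (h : a ≠ 0) : a = 1 := by
  revert h; revert a; decide

-- Z2
lemma spanZ2 (hdiag : ∀ x, A x x = 0) (u : V) :
    span (ZMod 2) (phicol (ZMod 2) '' {w | w ≠ u} ∪ {chicol A u}) =
      LinearMap.ker (LinearMap.proj u : (V → ZMod 2) →ₗ[ZMod 2] ZMod 2) := by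
  apply le_antisymm
  · rw [span_le]
    rintro x (⟨w, hw, rfl⟩ | rfl)
    · simp [LinearMap.mem_ker, phicol, (Ne.symm hw)]
    · simp [LinearMap.mem_ker, chicol, hdiag]
  · intro f hf
    simp only [LinearMap.mem_ker, LinearMap.proj_apply] at hf
    exact span_mono Set.subset_union_left (mem_span_phicol (fun v hv => by
      simp only [Set.mem_setOf_eq, not_not] at hv; rwa [hv]))

-- Z3a
lemma spanZ3a (hdiag : ∀ x, A x x = 0) (u v : V) (hvu : v ≠ u) (hA : A v u = 0) :
    span (ZMod 2) (phicol (ZMod 2) '' {w | w ≠ u ∧ w ≠ v} ∪ {chicol A u}) =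
      LinearMap.ker ((LinearMap.proj u).prod (LinearMap.proj v) :
        (V → ZMod 2) →ₗ[ZMod 2] ZMod 2 × ZMod 2) := by
  apply le_antisymm
  · rw [span_le]
    rintro x (⟨w, hw, rfl⟩ | rfl)
    · simp [LinearMap.mem_ker, phicol, Ne.symm hw.1, Ne.symm hw.2, Prod.ext_iff]
    · simp [LinearMap.mem_ker, chicol, hdiag, hA, Prod.ext_iff]
  · intro f hf
    simp only [LinearMap.mem_ker, LinearMap.prod_apply, LinearMap.proj_apply, Prod.ext_iff,
      Pi.prod, Prod.mk_eq_zero] at hf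
    exact span_mono Set.subset_union_left (mem_span_phicol (fun x hx => by
      simp only [Set.mem_setOf_eq, not_and_or, not_not] at hx
      rcases hx with rfl | rfl
      exacts [hf.1, hf.2]))

-- Z3b
lemma spanZ3b (hdiag : ∀ x, A x x = 0) (u v : V) (hA : A v u ≠ 0) :
    span (ZMod 2) (phicol (ZMod 2) '' {w | w ≠ u ∧ w ≠ v} ∪ {chicol A u}) =
      LinearMap.ker (LinearMap.proj u : (V → ZMod 2) →ₗ[ZMod 2] ZMod 2) := by
  have hA1 : A v u = 1 := zmod_ne_zero hA
  apply le_antisymm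
  · rw [span_le]
    rintro x (⟨w, hw, rfl⟩ | rfl)
    · simp [LinearMap.mem_ker, phicol, Ne.symm hw.1]
    · simp [LinearMap.mem_ker, chicol, hdiag]
  · intro f hf
    simp only [LinearMap.mem_ker, LinearMap.proj_apply] at hf
    have hg : f - f v • chicol A u ∈ span (ZMod 2) (phicol (ZMod 2) '' {w | w ≠ u ∧ w ≠ v}) := by
      refine mem_span_phicol (fun x hx => ?_)
      simp only [Set.mem_setOf_eq, not_and_or, not_not] at hx
      rcases hx with rfl | rfl
      · simp [chicol, hdiag, hf]
      · simp [chicol, hA1]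
    have : f = (f - f v • chicol A u) + f v • chicol A u := by ring
    rw [this]
    exact add_mem (span_mono Set.subset_union_left hg)
      (smul_mem _ _ (subset_span (Set.mem_union_right _ rfl)))

-- Z4
lemma spanZ4 (hdiag : ∀ x, A x x = 0) (v : V) :
    span (ZMod 2) (phicol (ZMod 2) '' {w | w ≠ v} ∪ {psicol A v}) = ⊤ := by
  rw [eq_top_iff']
  intro f
  have hg : f - f v • psicol A v ∈ span (ZMod 2) (phicol (ZMod 2) '' {w | w ≠ v}) := by
    refine mem_span_phicol (fun x hx => ?_)
    simp only [Set.mem_setOf_eq, not_not] at hx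
    subst hx
    simp [psicol, phicol, chicol, hdiag]
  have : f = (f - f v • psicol A v) + f v • psicol A v := by ring
  rw [this]
  exact add_mem (span_mono Set.subset_union_left hg)
    (smul_mem _ _ (subset_span (Set.mem_union_right _ rfl)))

-- Z5
lemma spanZ5 (hdiag : ∀ x, A x x = 0) (v u : V) (hvu : v ≠ u) (h1 : A v u = 1) (h2 : A u v = 1) :
    span (ZMod 2) (phicol (ZMod 2) '' {w | w ≠ v ∧ w ≠ u} ∪ {psicol A v, psicol A u}) =
      LinearMap.ker ((LinearMap.proj v : (V → ZMod 2) →ₗ[ZMod 2] ZMod 2) +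
        (LinearMap.proj u : (V → ZMod 2) →ₗ[ZMod 2] ZMod 2)) := by
  have h11 : (1 + 1 : ZMod 2) = 0 := by decide
  apply le_antisymm
  · rw [span_le]
    rintro x (⟨w, hw, rfl⟩ | rfl | rfl)
    · simp [LinearMap.mem_ker, phicol, Ne.symm hw.1, Ne.symm hw.2]
    · simp [LinearMap.mem_ker, psicol, phicol, chicol, hdiag, h2, hvu.symm, h11]
    · simp [LinearMap.mem_ker, psicol, phicol, chicol, hdiag, h1, hvu, h11]
  · intro f hf
    simp only [LinearMap.mem_ker, LinearMap.add_apply, LinearMap.proj_apply] at hf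
    have hfu : f u = f v := by
      have : ∀ a b : ZMod 2, a + b = 0 → b = a := by decide
      exact this _ _ hf
    have hg : f - f v • psicol A v ∈
        span (ZMod 2) (phicol (ZMod 2) '' {w | w ≠ v ∧ w ≠ u}) := by
      refine mem_span_phicol (fun x hx => ?_)
      simp only [Set.mem_setOf_eq, not_and_or, not_not] at hx
      rcases hx with rfl | rfl
      · simp [psicol, phicol, chicol, hdiag]
      · simp [psicol, phicol, chicol, h2, hfu, Ne.symm hvu]
    have : f = (f - f v • psicol A v) + f v • psicol A v := by ring
    rw [this]
    refine add_mem (span_mono Set.subset_union_left hg)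
      (smul_mem _ _ (subset_span (Set.mem_union_right _ ?_)))
    exact Set.mem_insert _ _


/-- the test sets -/
def Sset (j : Fin 3) (t r : Set V) : Set (V × Fin 3) :=
  (fun w => (w, (0 : Fin 3))) '' t ∪ (fun w => (w, j)) '' r

lemma subtrans_Sset {j : Fin 3} (hj : j ≠ 0) {t r : Set V} (h : ∀ x ∈ r, x ∉ t) :
    Subtransversal3 (Sset j t r) := by
  rintro v i i' (⟨w, hw, hwe⟩ | ⟨w, hw, hwe⟩) (⟨w', hw', hwe'⟩ | ⟨w', hw', hwe'⟩) <;>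
    obtain ⟨rfl, rfl⟩ := Prod.mk.injEq .. ▸ hwe <;>
    obtain ⟨rfl, rfl⟩ := Prod.mk.injEq .. ▸ hwe'
  · rfl
  · exact absurd hw (h _ hw')
  · exact absurd hw' (h _ hw)
  · rfl

lemma colSpanRank_def {F : Type} [Field F] {m n : Type} (M : Matrix m n F) (S : Set n) :
    colSpanRank F M S = finrank F (span F ((fun j i => M i j) '' S)) := rfl

lemma colIAS0 (w : V) : (fun i => IASmat A i (w, (0 : Fin 3))) = phicol (ZMod 2) w := by
  funext v; simp [IASmat, phicol]

lemma colIAS1 (w : V) : (fun i => IASmat A i (w, (1 : Fin 3))) = chicol A w := by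
  funext v; simp [IASmat, chicol, show (1 : Fin 3) ≠ 0 by decide]

lemma colIAS2 (w : V) : (fun i => IASmat A i (w, (2 : Fin 3))) = psicol A w := by
  funext v
  simp [IASmat, psicol, chicol, phicol, show (2 : Fin 3) ≠ 0 by decide,
    show (2 : Fin 3) ≠ 1 by decide]

lemma imgIAS (j : Fin 3) (t r : Set V) :
    (fun p (i : V) => IASmat A i p) '' Sset j t r =
      phicol (ZMod 2) '' t ∪ (fun w (i : V) => IASmat A i (w, j)) '' r := by
  rw [Sset, Set.image_union, Set.image_image, Set.image_image]
  congr 1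

lemma rankZ0 :
    colSpanRank (ZMod 2) (IASmat A) (Sset 1 Set.univ ∅) = Fintype.card V := by
  rw [colSpanRank_def, imgIAS, Set.image_empty, Set.union_empty, Set.image_univ]
  have htop : span (ZMod 2) (Set.range (phicol (ZMod 2) (V := V))) = ⊤ := by
    rw [eq_top_iff']
    intro f
    rw [← Set.image_univ]
    exact mem_span_phicol (fun v hv => absurd (Set.mem_univ v) hv)
  rw [htop]
  simpa [finrank_top] using Module.finrank_fintype_fun_eq_card (R := ZMod 2) (η := V)

lemma rankZ2 (hdiag : ∀ x, A x x = 0) (u : V) :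
    colSpanRank (ZMod 2) (IASmat A) (Sset 1 {w | w ≠ u} {u}) + 1 = Fintype.card V := by
  rw [colSpanRank_def, imgIAS, Set.image_singleton]
  have h1 : ({(fun i => IASmat A i (u, (1 : Fin 3)))} : Set (V → ZMod 2)) = {chicol A u} :=
    congrArg _ (colIAS1 A u)
  rw [h1, spanZ2 A hdiag u]
  have h2 := finrank_ker_eq (K := ZMod 2)
    (LinearMap.proj u : (V → ZMod 2) →ₗ[ZMod 2] ZMod 2) (proj_surjective u)
  rwa [finrank_self] at h2

lemma rankZ3a (hdiag : ∀ x, A x x = 0) (u v : V) (hvu : v ≠ u) (hA : A v u = 0) :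
    colSpanRank (ZMod 2) (IASmat A) (Sset 1 {w | w ≠ u ∧ w ≠ v} {u}) + 2 = Fintype.card V := by
  rw [colSpanRank_def, imgIAS, Set.image_singleton]
  have h1 : ({(fun i => IASmat A i (u, (1 : Fin 3)))} : Set (V → ZMod 2)) = {chicol A u} :=
    congrArg _ (colIAS1 A u)
  rw [h1, spanZ3a A hdiag u v hvu hA]
  have h2 := finrank_ker_eq (K := ZMod 2)
    ((LinearMap.proj u).prod (LinearMap.proj v) : (V → ZMod 2) →ₗ[ZMod 2] ZMod 2 × ZMod 2)
    (proj2_surjective hvu.symm)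
  rwa [Module.finrank_prod, finrank_self] at h2

lemma rankZ3b (hdiag : ∀ x, A x x = 0) (u v : V) (hA : A v u ≠ 0) :
    colSpanRank (ZMod 2) (IASmat A) (Sset 1 {w | w ≠ u ∧ w ≠ v} {u}) + 1 = Fintype.card V := by
  rw [colSpanRank_def, imgIAS, Set.image_singleton]
  have h1 : ({(fun i => IASmat A i (u, (1 : Fin 3)))} : Set (V → ZMod 2)) = {chicol A u} :=
    congrArg _ (colIAS1 A u)
  rw [h1, spanZ3b A hdiag u v hA]
  have h2 := finrank_ker_eq (K := ZMod 2)
    (LinearMap.proj u : (V → ZMod 2) →ₗ[ZMod 2] ZMod 2) (proj_surjective u)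
  rwa [finrank_self] at h2

lemma rankZ4 (hdiag : ∀ x, A x x = 0) (v : V) :
    colSpanRank (ZMod 2) (IASmat A) (Sset 2 {w | w ≠ v} {v}) = Fintype.card V := by
  rw [colSpanRank_def, imgIAS, Set.image_singleton]
  have h1 : ({(fun i => IASmat A i (v, (2 : Fin 3)))} : Set (V → ZMod 2)) = {psicol A v} :=
    congrArg _ (colIAS2 A v)
  rw [h1, spanZ4 A hdiag v, finrank_top, Module.finrank_fintype_fun_eq_card]

lemma rankZ5 (hdiag : ∀ x, A x x = 0) (v u : V) (hvu : v ≠ u) (h1 : A v u = 1)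
    (h2 : A u v = 1) :
    colSpanRank (ZMod 2) (IASmat A) (Sset 2 {w | w ≠ v ∧ w ≠ u} {v, u}) + 1 =
      Fintype.card V := by
  rw [colSpanRank_def, imgIAS]
  have him : ((fun w (i : V) => IASmat A i (w, (2 : Fin 3))) '' {v, u} : Set (V → ZMod 2)) =
      {psicol A v, psicol A u} := by
    rw [Set.image_insert_eq, Set.image_singleton, colIAS2 A v, colIAS2 A u]
  rw [him, spanZ5 A hdiag v u hvu h1 h2]
  have h3 := finrank_ker_eq (K := ZMod 2)
    ((LinearMap.proj v : (V → ZMod 2) →ₗ[ZMod 2] ZMod 2) +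
      (LinearMap.proj u : (V → ZMod 2) →ₗ[ZMod 2] ZMod 2)) (projsum_surjective hvu)
  rwa [finrank_self] at h3


section BasisExt

variable {M : Type} [AddCommGroup M] [Module K M] [FiniteDimensional K M]
variable {ι : Type} [Fintype ι]

/-- a complement of a submodule -/
def sCompl (s : Submodule K M) : Submodule K M := (Submodule.exists_isCompl s).choose

lemma sCompl_isCompl (s : Submodule K M) : IsCompl s (sCompl s) :=
  (Submodule.exists_isCompl s).choose_spec

/-- dimension of the complement of the span of a family -/
def extd (K : Type) [Field K] {M : Type} [AddCommGroup M] [Module K M] {ι : Type}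
    (b : ι → M) : ℕ := finrank K (sCompl (span K (Set.range b)))

/-- extension of a linearly independent family to a basis, indexed by `ι ⊕ Fin (extd b)` -/
def extBasis {b : ι → M} (hb : LinearIndependent K b) :
    Basis (ι ⊕ Fin (extd K b)) K M :=
  ((Basis.span hb).prod (Module.finBasis K (sCompl (span K (Set.range b))))).map
    (Submodule.prodEquivOfIsCompl _ _ (sCompl_isCompl _))

lemma prodEquiv_basis_inl {p q : Submodule K M} (h : IsCompl p q) {ι' κ : Type}
    (b1 : Basis ι' K p) (b2 : Basis κ K q) (v : ι') :
    ((b1.prod b2).map (Submodule.prodEquivOfIsCompl p q h)) (Sum.inl v) = (b1 v : M) := by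
  rw [Basis.map_apply, Submodule.coe_prodEquivOfIsCompl', Basis.prod_apply_inl_fst,
    Basis.prod_apply_inl_snd]
  simp

lemma extBasis_inl {b : ι → M} (hb : LinearIndependent K b) (v : ι) :
    extBasis hb (Sum.inl v) = b v := by
  have h := prodEquiv_basis_inl (sCompl_isCompl (span K (Set.range b)))
    (Basis.span hb) (Module.finBasis K ↥(sCompl (span K (Set.range b)))) v
  rw [extBasis]
  exact h.trans (congrArg Subtype.val (Basis.span_apply hb v))

lemma repr_vanish {κ : Type} [Fintype κ] {b : ι → M} (C : Basis (ι ⊕ κ) K M)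
    (hC : ∀ v, C (Sum.inl v) = b v) {t : Set ι} {x : M} (hx : x ∈ span K (b '' t)) :
    ∀ j, j ∉ Sum.inl '' t → C.repr x j = 0 := by
  classical
  intro j hj
  induction hx using Submodule.span_induction with
  | mem y hy =>
    obtain ⟨w, hw, rfl⟩ := hy
    rw [← hC w, C.repr_self, Finsupp.single_apply, if_neg]
    exact fun h => hj (h ▸ ⟨w, hw, rfl⟩)
  | zero => simp
  | add y z hy hz hy' hz' => simp [hy', hz']
  | smul a y hy hy' => simp [hy']

lemma mem_span_of_repr_vanish {κ : Type} [Fintype κ] {b : ι → M} (C : Basis (ι ⊕ κ) K M)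
    (hC : ∀ v, C (Sum.inl v) = b v) {t : Set ι} {x : M}
    (h : ∀ j, j ∉ Sum.inl '' t → C.repr x j = 0) : x ∈ span K (b '' t) := by
  rw [← C.sum_repr x]
  refine Submodule.sum_mem _ fun j _ => ?_
  by_cases hj : j ∈ Sum.inl '' t
  · obtain ⟨w, hw, rfl⟩ := hj
    rw [hC]
    exact Submodule.smul_mem _ _ (subset_span ⟨w, hw, rfl⟩)
  · rw [h j hj, zero_smul]
    exact zero_mem _

lemma span_image_scale {ι' M' : Type} [AddCommGroup M'] [Module K M'] (c c' : ι' → M')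
    (h : ∀ p, ∃ a : K, a ≠ 0 ∧ c' p = a • c p) (S : Set ι') :
    span K (c' '' S) = span K (c '' S) := by
  apply le_antisymm <;> rw [span_le] <;> rintro _ ⟨p, hp, rfl⟩
  · obtain ⟨a, _, he⟩ := h p
    rw [he]
    exact Submodule.smul_mem _ _ (subset_span (Set.mem_image_of_mem _ hp))
  · obtain ⟨a, ha, he⟩ := h p
    have : c p = a⁻¹ • c' p := by rw [he, smul_smul, inv_mul_cancel₀ ha, one_smul]
    rw [this]
    exact Submodule.smul_mem _ _ (subset_span (Set.mem_image_of_mem _ hp))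

lemma finrank_span_image {b : ι → M} (hb : LinearIndependent K b) (t : Set ι) [Fintype t] :
    finrank K (span K (b '' t)) = Fintype.card t := by
  rw [Set.image_eq_range]
  exact finrank_span_eq_card (hb.comp _ Subtype.val_injective)

end BasisExt

section BasisExt2
variable {M : Type} [AddCommGroup M] [Module K M] [FiniteDimensional K M]
variable {ι : Type} [Fintype ι]

lemma det_lemma {κ : Type} [Fintype κ] {b : ι → M} (C : Basis (ι ⊕ κ) K M)
    (hC : ∀ v, C (Sum.inl v) = b v)
    {v u : ι} (hvu : v ≠ u) {y1 y2 : M}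
    (h1r : ∀ i, C.repr y1 (Sum.inr i) = 0) (h2r : ∀ i, C.repr y2 (Sum.inr i) = 0)
    (hfr : finrank K (span K (b '' {w | w ≠ v ∧ w ≠ u} ∪ {y1, y2})) + 1 = Fintype.card ι)
    (hrk : finrank K (span K (Set.range b)) = Fintype.card ι) :
    C.repr y1 (Sum.inl v) * C.repr y2 (Sum.inl u) -
      C.repr y1 (Sum.inl u) * C.repr y2 (Sum.inl v) = 0 := by
  classical
  by_contra hne
  have hreprb : ∀ x, C.repr (b x) = Finsupp.single (Sum.inl x) 1 := fun x => by
    rw [← hC x]; exact C.repr_self _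
  set U := span K (b '' {w | w ≠ v ∧ w ≠ u} ∪ {y1, y2}) with hU_def
  have hy1U : y1 ∈ U := subset_span (Set.mem_union_right _ (Set.mem_insert _ _))
  have hy2U : y2 ∈ U := subset_span (Set.mem_union_right _ (Set.mem_insert_of_mem _ rfl))
  -- abbreviations (only as haves)
  have hz : ∀ (a c : K),
      ∀ j, C.repr (a • y1 - c • y2) j = a * C.repr y1 j - c * C.repr y2 j := by
    intro a c j
    simp [map_sub, _root_.map_smul, Finsupp.sub_apply, Finsupp.smul_apply, smul_eq_mul]
  -- first new vector: gives b v ∈ U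
  have hbv : b v ∈ U := by
    have hd : C.repr y1 (Sum.inl v) * C.repr y2 (Sum.inl u) -
        C.repr y1 (Sum.inl u) * C.repr y2 (Sum.inl v) ≠ 0 := hne
    set w1 := (C.repr y1 (Sum.inl v) * C.repr y2 (Sum.inl u) -
        C.repr y1 (Sum.inl u) * C.repr y2 (Sum.inl v))⁻¹ •
        (C.repr y2 (Sum.inl u) • y1 - C.repr y1 (Sum.inl u) • y2) with hw1_def
    have hw1U : w1 ∈ U := smul_mem _ _ (sub_mem (smul_mem _ _ hy1U) (smul_mem _ _ hy2U))
    have hw1 : ∀ j, C.repr w1 j = (C.repr y1 (Sum.inl v) * C.repr y2 (Sum.inl u) -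
        C.repr y1 (Sum.inl u) * C.repr y2 (Sum.inl v))⁻¹ *
        (C.repr y2 (Sum.inl u) * C.repr y1 j - C.repr y1 (Sum.inl u) * C.repr y2 j) := by
      intro j
      rw [hw1_def, _root_.map_smul, Finsupp.smul_apply, hz, smul_eq_mul]
    have hsubm : w1 - b v ∈ span K (b '' {w | w ≠ v ∧ w ≠ u}) := by
      refine mem_span_of_repr_vanish C hC (fun j hj => ?_)
      have hrepr_diff : C.repr (w1 - b v) j = C.repr w1 j - C.repr (b v) j := by
        simp [map_sub]
      rcases j with w | i
      · have hw : ¬(w ≠ v ∧ w ≠ u) := fun hmem => hj ⟨w, hmem, rfl⟩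
        rcases not_and_or.mp hw with hw | hw
        · -- w = v
          rw [not_not] at hw
          subst hw
          rw [hrepr_diff, hw1, hreprb, Finsupp.single_apply, if_pos rfl]
          field_simp
          ring
        · rw [not_not] at hw
          subst hw
          rw [hrepr_diff, hw1, hreprb, Finsupp.single_apply,
            if_neg (fun h => hvu (Sum.inl_injective h))]
          ring
      · rw [hrepr_diff, hw1, hreprb, h1r, h2r, Finsupp.single_apply,
          if_neg Sum.inl_ne_inr]
        ring
    have : b v = w1 - (w1 - b v) := (sub_sub_cancel _ _).symm
    rw [this]
    exact sub_mem hw1U (span_mono Set.subset_union_left hsubm)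
  -- second new vector: gives b u ∈ U
  have hbu : b u ∈ U := by
    have hd : C.repr y1 (Sum.inl v) * C.repr y2 (Sum.inl u) -
        C.repr y2 (Sum.inl v) * C.repr y1 (Sum.inl u) ≠ 0 := by
      intro h; exact hne (by linear_combination h)
    set w2 := (C.repr y1 (Sum.inl v) * C.repr y2 (Sum.inl u) -
        C.repr y2 (Sum.inl v) * C.repr y1 (Sum.inl u))⁻¹ •
        (C.repr y1 (Sum.inl v) • y2 - C.repr y2 (Sum.inl v) • y1) with hw2_def
    have hw2U : w2 ∈ U := smul_mem _ _ (sub_mem (smul_mem _ _ hy2U) (smul_mem _ _ hy1U))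
    have hz2 : ∀ (a c : K),
        ∀ j, C.repr (a • y2 - c • y1) j = a * C.repr y2 j - c * C.repr y1 j := by
      intro a c j
      simp [map_sub, _root_.map_smul, Finsupp.sub_apply, Finsupp.smul_apply, smul_eq_mul]
    have hw2 : ∀ j, C.repr w2 j = (C.repr y1 (Sum.inl v) * C.repr y2 (Sum.inl u) -
        C.repr y2 (Sum.inl v) * C.repr y1 (Sum.inl u))⁻¹ *
        (C.repr y1 (Sum.inl v) * C.repr y2 j - C.repr y2 (Sum.inl v) * C.repr y1 j) := by
      intro j
      rw [hw2_def, _root_.map_smul, Finsupp.smul_apply, hz2, smul_eq_mul]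
    have hsubm : w2 - b u ∈ span K (b '' {w | w ≠ v ∧ w ≠ u}) := by
      refine mem_span_of_repr_vanish C hC (fun j hj => ?_)
      have hrepr_diff : C.repr (w2 - b u) j = C.repr w2 j - C.repr (b u) j := by
        simp [map_sub]
      rcases j with w | i
      · have hw : ¬(w ≠ v ∧ w ≠ u) := fun hmem => hj ⟨w, hmem, rfl⟩
        rcases not_and_or.mp hw with hw | hw
        · rw [not_not] at hw
          subst hw
          rw [hrepr_diff, hw2, hreprb, Finsupp.single_apply,
            if_neg (fun h => hvu (Sum.inl_injective h).symm)]
          ring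
        · rw [not_not] at hw
          subst hw
          rw [hrepr_diff, hw2, hreprb, Finsupp.single_apply, if_pos rfl]
          field_simp
          ring
      · rw [hrepr_diff, hw2, hreprb, h1r, h2r, Finsupp.single_apply,
          if_neg Sum.inl_ne_inr]
        ring
    have : b u = w2 - (w2 - b u) := (sub_sub_cancel _ _).symm
    rw [this]
    exact sub_mem hw2U (span_mono Set.subset_union_left hsubm)
  have hall : span K (Set.range b) ≤ U := by
    rw [span_le]
    rintro _ ⟨x, rfl⟩
    by_cases hxv : x = v
    · subst hxv; exact hbv
    by_cases hxu : x = u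
    · subst hxu; exact hbu
    exact subset_span (Set.mem_union_left _ (Set.mem_image_of_mem _ ⟨hxv, hxu⟩))
  have hmono := Submodule.finrank_mono hall
  omega


end BasisExt2

lemma card1 (u : V) : Fintype.card ↥{w : V | w ≠ u} + 1 = Fintype.card V := by
  classical
  have h : Fintype.card ↥{w : V | w ≠ u} = Fintype.card {w : V // w ≠ u} :=
    Fintype.card_congr (Equiv.refl _)
  rw [h, Fintype.card_subtype]
  have h2 : Finset.univ.filter (fun w : V => w ≠ u) = Finset.univ.erase u := by
    ext x; simp [Finset.mem_erase]
  rw [h2, Finset.card_erase_of_mem (Finset.mem_univ u), Finset.card_univ]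
  have : 0 < Fintype.card V := Fintype.card_pos_iff.mpr ⟨u⟩
  omega

lemma card2 {u v : V} (h : u ≠ v) :
    Fintype.card ↥{w : V | w ≠ u ∧ w ≠ v} + 2 = Fintype.card V := by
  classical
  have hc : Fintype.card ↥{w : V | w ≠ u ∧ w ≠ v} =
      Fintype.card {w : V // w ≠ u ∧ w ≠ v} := Fintype.card_congr (Equiv.refl _)
  rw [hc, Fintype.card_subtype]
  have h2 : Finset.univ.filter (fun w : V => w ≠ u ∧ w ≠ v) =
      (Finset.univ.erase u).erase v := by
    ext x; simp [Finset.mem_erase, and_comm]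
  rw [h2, Finset.card_erase_of_mem, Finset.card_erase_of_mem (Finset.mem_univ u),
    Finset.card_univ]
  · have : 1 < Fintype.card V := Fintype.one_lt_card_iff.mpr ⟨u, v, h⟩
    omega
  · exact Finset.mem_erase.mpr ⟨Ne.symm h, Finset.mem_univ v⟩


open Classical in
/-- a nonzero scaling factor -/
def ddef {F : Type} [Field F] (x : F) : F := if x = 0 then 1 else x⁻¹

lemma ddef_eq {F : Type} [Field F] {x : F} (h : x ≠ 0) : ddef x = x⁻¹ := by
  simp only [ddef]
  rw [if_neg h]

lemma ddef_ne_zero {F : Type} [Field F] (x : F) : ddef x ≠ 0 := by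
  simp only [ddef]
  by_cases h : x = 0
  · rw [if_pos h]; exact one_ne_zero
  · rw [if_neg h]; exact inv_ne_zero h

lemma ddef_mul {F : Type} [Field F] {x : F} (h : x ≠ 0) : ddef x * x = 1 := by
  rw [ddef_eq h]; exact inv_mul_cancel₀ h

/-- columns of Q -/
def ccol {F : Type} [Field F] {V : Type} {k : ℕ} (Q : Matrix (Fin k) (V × Fin 3) F) :
    V × Fin 3 → Fin k → F := fun p i => Q i p

/-- the φ columns of Q -/
def bcol {F : Type} [Field F] {V : Type} {k : ℕ} (Q : Matrix (Fin k) (V × Fin 3) F) :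
    V → Fin k → F := fun v => ccol Q (v, 0)

lemma imgQ {F : Type} [Field F] {k : ℕ} (Q : Matrix (Fin k) (V × Fin 3) F)
    (j : Fin 3) (t r : Set V) :
    (fun p (i : Fin k) => Q i p) '' Sset j t r =
      bcol Q '' t ∪ (fun w => ccol Q (w, j)) '' r := by
  rw [Sset, Set.image_union, Set.image_image, Set.image_image]
  rfl

lemma core (hsym : A.IsSymm) (hdiag : ∀ x, A x x = 0) (F : Type) [Field F] (k : ℕ)
    (Q : Matrix (Fin k) (V × Fin 3) F)
    (hQ : ∀ S, Subtransversal3 S → colSpanRank F Q S = colSpanRank (ZMod 2) (IASmat A) S) :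
    ∃ (t : ℕ) (P : Matrix (V ⊕ Fin t) (V × Fin 3) F),
      (∀ v u : V, P (Sum.inl v) (u, 0) = if v = u then 1 else 0) ∧
      (∀ (i : Fin t) (u : V), P (Sum.inr i) (u, 0) = 0) ∧
      (∀ (i : Fin t) (u : V), P (Sum.inr i) (u, 1) = 0) ∧
      (∀ v u : V, P (Sum.inl v) (u, 1) ≠ 0 ↔ A v u ≠ 0) ∧
      (∀ S : Set (V × Fin 3), Subtransversal3 S →
        colSpanRank F P S = colSpanRank (ZMod 2) (IASmat A) S) ∧
      (Q.rank = Fintype.card V →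
        (∀ (i : Fin t) (u : V), P (Sum.inr i) (u, 2) = 0) ∧
        (∀ v : V, P (Sum.inl v) (v, 2) = 1) ∧
        (∀ v u : V, A v u = 1 → P (Sum.inl v) (u, 2) * P (Sum.inl u) (v, 2) = 1)) := by
  classical
  -- subtransversality of the test sets
  have hsub0 : Subtransversal3 (Sset (V := V) 1 Set.univ ∅) :=
    subtrans_Sset (by decide) (by simp)
  have hsub2 : ∀ u : V, Subtransversal3 (Sset 1 {w | w ≠ u} {u}) := fun u =>
    subtrans_Sset (by decide) (fun x hx => by
      simp only [Set.mem_singleton_iff] at hx; subst hx; simp)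
  have hsub3 : ∀ u v : V, Subtransversal3 (Sset 1 {w | w ≠ u ∧ w ≠ v} {u}) := fun u v =>
    subtrans_Sset (by decide) (fun x hx => by
      simp only [Set.mem_singleton_iff] at hx; subst hx; simp)
  have hsub4 : ∀ v : V, Subtransversal3 (Sset 2 {w | w ≠ v} {v}) := fun v =>
    subtrans_Sset (by decide) (fun x hx => by
      simp only [Set.mem_singleton_iff] at hx; subst hx; simp)
  have hsub5 : ∀ v u : V, Subtransversal3 (Sset 2 {w | w ≠ v ∧ w ≠ u} {v, u}) := fun v u =>
    subtrans_Sset (by decide) (fun x hx => by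
      rcases hx with rfl | rfl
      · simp
      · simp)
  -- the key rank transfer
  have key : ∀ (j : Fin 3) (t r : Set V), Subtransversal3 (Sset j t r) →
      finrank F (span F (bcol Q '' t ∪ (fun w => ccol Q (w, j)) '' r)) =
        colSpanRank (ZMod 2) (IASmat A) (Sset j t r) := by
    intro j t r hsub
    rw [← imgQ Q j t r, ← colSpanRank_def]
    exact hQ _ hsub
  -- φ columns are independent
  have hr0 : finrank F (span F (Set.range (bcol Q))) = Fintype.card V := by
    have h := key 1 Set.univ ∅ hsub0
    rw [rankZ0 A] at h
    rw [Set.image_empty, Set.union_empty, Set.image_univ] at h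
    exact h
  have hb : LinearIndependent F (bcol Q) :=
    linearIndependent_iff_card_eq_finrank_span.mpr hr0.symm
  set B := extBasis hb with hB_def
  have hBinl : ∀ v, B (Sum.inl v) = bcol Q v := extBasis_inl hb
  have hreprb : ∀ v, B.repr (bcol Q v) = Finsupp.single (Sum.inl v) 1 := fun v => by
    rw [← hBinl v]; exact B.repr_self _
  have hinr_not : ∀ (t : Set V) (i : Fin (extd F (bcol Q))),
      (Sum.inr i : V ⊕ Fin (extd F (bcol Q))) ∉ Sum.inl '' t := by
    rintro t i ⟨w, _, h⟩; cases h
  -- χ column memberships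
  have hchi : ∀ u, ccol Q (u, 1) ∈ span F (bcol Q '' {w : V | w ≠ u}) := by
    intro u
    have h2 := key 1 {w | w ≠ u} {u} (hsub2 u)
    rw [Set.image_singleton] at h2
    have h3 := rankZ2 A hdiag u
    have h4 : finrank F (span F (bcol Q '' {w : V | w ≠ u})) =
        Fintype.card ↥{w : V | w ≠ u} := finrank_span_image hb _
    have h5 := card1 u
    have hle : span F (bcol Q '' {w : V | w ≠ u}) ≤
        span F (bcol Q '' {w : V | w ≠ u} ∪ {ccol Q (u, 1)}) :=
      span_mono Set.subset_union_left
    have heq := Submodule.eq_of_le_of_finrank_le hle (by omega)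
    rw [heq]
    exact subset_span (Set.mem_union_right _ rfl)
  have hchiv : ∀ u, ∀ j, j ∉ Sum.inl '' {w : V | w ≠ u} →
      B.repr (ccol Q (u, 1)) j = 0 := fun u => repr_vanish B hBinl (hchi u)
  -- the characterisation of nonzero entries of the χ block
  have hmem_iff : ∀ u v : V, v ≠ u →
      (ccol Q (u, 1) ∈ span F (bcol Q '' {w : V | w ≠ u ∧ w ≠ v}) ↔ A v u = 0) := by
    intro u v hvu
    constructor
    · intro hmem
      by_contra hA
      have h2 := key 1 {w | w ≠ u ∧ w ≠ v} {u} (hsub3 u v)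
      rw [Set.image_singleton] at h2
      have h3 := rankZ3b A hdiag u v hA
      have hle : span F (bcol Q '' {w : V | w ≠ u ∧ w ≠ v} ∪ {ccol Q (u, 1)}) ≤
          span F (bcol Q '' {w : V | w ≠ u ∧ w ≠ v}) :=
        span_le.mpr (Set.union_subset subset_span (Set.singleton_subset_iff.mpr hmem))
      have h4 := Submodule.finrank_mono hle
      have h5 : finrank F (span F (bcol Q '' {w : V | w ≠ u ∧ w ≠ v})) =
          Fintype.card ↥{w : V | w ≠ u ∧ w ≠ v} := finrank_span_image hb _
      have h6 := card2 hvu.symm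
      omega
    · intro hA
      have h2 := key 1 {w | w ≠ u ∧ w ≠ v} {u} (hsub3 u v)
      rw [Set.image_singleton] at h2
      have h3 := rankZ3a A hdiag u v hvu hA
      have h5 : finrank F (span F (bcol Q '' {w : V | w ≠ u ∧ w ≠ v})) =
          Fintype.card ↥{w : V | w ≠ u ∧ w ≠ v} := finrank_span_image hb _
      have h6 := card2 hvu.symm
      have hle : span F (bcol Q '' {w : V | w ≠ u ∧ w ≠ v}) ≤
          span F (bcol Q '' {w : V | w ≠ u ∧ w ≠ v} ∪ {ccol Q (u, 1)}) :=
        span_mono Set.subset_union_left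
      have heq := Submodule.eq_of_le_of_finrank_le hle (by omega)
      rw [heq]
      exact subset_span (Set.mem_union_right _ rfl)
  have hrepr_iff : ∀ u v : V, v ≠ u →
      (B.repr (ccol Q (u, 1)) (Sum.inl v) = 0 ↔
        ccol Q (u, 1) ∈ span F (bcol Q '' {w : V | w ≠ u ∧ w ≠ v})) := by
    intro u v hvu
    constructor
    · intro h0
      refine mem_span_of_repr_vanish B hBinl (fun j hj => ?_)
      rcases j with w | i
      · by_cases hwv : w = v
        · subst hwv; exact h0
        · have hw2 : w ∉ {x : V | x ≠ u ∧ x ≠ v} := fun hmem => hj ⟨w, hmem, rfl⟩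
          have hwu : w = u := by
            by_contra hwu
            exact hw2 ⟨hwu, hwv⟩
          subst hwu
          exact hchiv w (Sum.inl w) (fun ⟨x, hx, hxe⟩ => hx (Sum.inl_injective hxe))
      · exact hchiv u (Sum.inr i) (hinr_not _ _)
    · intro hmem
      refine repr_vanish B hBinl hmem (Sum.inl v) (fun hj => ?_)
      obtain ⟨x, hx, hxe⟩ := hj
      cases Sum.inl_injective hxe
      exact hx.2 rfl
  have hpat : ∀ v u : V, (B.repr (ccol Q (u, 1)) (Sum.inl v) ≠ 0 ↔ A v u ≠ 0) := by
    intro v u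
    by_cases hvu : v = u
    · subst hvu
      have h1 : B.repr (ccol Q (v, 1)) (Sum.inl v) = 0 :=
        hchiv v (Sum.inl v) (fun ⟨x, hx, hxe⟩ => hx (Sum.inl_injective hxe))
      simp [h1, hdiag v]
    · exact not_iff_not.mpr ((hrepr_iff u v hvu).trans (hmem_iff u v hvu))
  -- the matrix
  refine ⟨extd F (bcol Q),
    Matrix.of (fun i p =>
      B.repr ((if p.2 = 2 then ddef (B.repr (ccol Q (p.1, 2)) (Sum.inl p.1)) else 1) •
        ccol Q p) i), ?_, ?_, ?_, ?_, ?_, ?_⟩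
  · -- (1) identity block
    intro v u
    show B.repr ((if (0 : Fin 3) = 2 then _ else 1) • ccol Q (u, 0)) (Sum.inl v) = _
    rw [if_neg (by decide : ¬(0 : Fin 3) = 2), one_smul,
      show ccol Q (u, 0) = bcol Q u from rfl, hreprb u, Finsupp.single_apply]
    by_cases h : v = u
    · subst h; simp
    · rw [if_neg (fun hh => h (Sum.inl_injective hh).symm), if_neg h]
  · -- (2) zero block below identity
    intro i u
    show B.repr ((if (0 : Fin 3) = 2 then _ else 1) • ccol Q (u, 0)) (Sum.inr i) = 0
    rw [if_neg (by decide : ¬(0 : Fin 3) = 2), one_smul,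
      show ccol Q (u, 0) = bcol Q u from rfl, hreprb u]
    exact Finsupp.single_eq_of_ne' (fun h => by cases h)
  · -- (3) zero block below χ
    intro i u
    show B.repr ((if (1 : Fin 3) = 2 then _ else 1) • ccol Q (u, 1)) (Sum.inr i) = 0
    rw [if_neg (by decide : ¬(1 : Fin 3) = 2), one_smul]
    exact hchiv u (Sum.inr i) (hinr_not _ _)
  · -- (4) support of the χ block
    intro v u
    show B.repr ((if (1 : Fin 3) = 2 then _ else 1) • ccol Q (u, 1)) (Sum.inl v) ≠ 0 ↔ _
    rw [if_neg (by decide : ¬(1 : Fin 3) = 2), one_smul]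
    exact hpat v u
  · -- (5) the matroid sheltering property
    intro S hS
    set e : (Fin k → F) ≃ₗ[F] (V ⊕ Fin (extd F (bcol Q)) → F) :=
      B.repr.trans (Finsupp.linearEquivFunOnFinite F F _) with he_def
    have himg : ((fun (j : V × Fin 3) (i : V ⊕ Fin (extd F (bcol Q))) =>
        (Matrix.of (fun i p =>
          B.repr ((if p.2 = 2 then ddef (B.repr (ccol Q (p.1, 2)) (Sum.inl p.1)) else 1) •
            ccol Q p) i)) i j) '' S) =
        e.toLinearMap '' ((fun p =>
          (if p.2 = 2 then ddef (B.repr (ccol Q (p.1, 2)) (Sum.inl p.1)) else 1) •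
            ccol Q p) '' S) := by
      rw [Set.image_image]
      rfl
    rw [colSpanRank_def, himg, Submodule.span_image]
    rw [LinearEquiv.finrank_map_eq e]
    have hsc := span_image_scale (ccol Q)
      (fun p => (if p.2 = 2 then ddef (B.repr (ccol Q (p.1, 2)) (Sum.inl p.1)) else 1) •
        ccol Q p)
      (fun p => ⟨(if p.2 = 2 then ddef (B.repr (ccol Q (p.1, 2)) (Sum.inl p.1)) else 1),
        by split
           · exact ddef_ne_zero _
           · exact one_ne_zero, rfl⟩) S
    rw [hsc, show ccol Q = fun (p : V × Fin 3) (i : Fin k) => Q i p from rfl,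
      ← colSpanRank_def]
    exact hQ S hS
  · -- (6,7,8) strict case
    intro hrank
    have hcols : ∀ p, ccol Q p ∈ span F (Set.range (bcol Q)) := by
      have h1 := Q.rank_eq_finrank_span_cols
      have hsubr : Set.range (bcol Q) ⊆ Set.range (ccol Q) := by
        rintro _ ⟨v, rfl⟩; exact ⟨(v, 0), rfl⟩
      have hle : span F (Set.range (bcol Q)) ≤ span F (Set.range (ccol Q)) :=
        span_mono hsubr
      have h2 : finrank F (span F (Set.range (ccol Q))) = Fintype.card V := by
        rw [show Set.range (ccol Q) = Set.range Q.col from rfl, ← h1]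
        exact hrank
      have heq := Submodule.eq_of_le_of_finrank_le hle (le_of_eq (h2.trans hr0.symm))
      intro p
      rw [heq]
      exact subset_span ⟨p, rfl⟩
    have hinr0 : ∀ p (i : Fin (extd F (bcol Q))), B.repr (ccol Q p) (Sum.inr i) = 0 := by
      intro p i
      have hmem : ccol Q p ∈ span F (bcol Q '' Set.univ) := by
        rw [Set.image_univ]; exact hcols p
      exact repr_vanish B hBinl hmem (Sum.inr i) (hinr_not _ _)
    have hdel : ∀ v, B.repr (ccol Q (v, 2)) (Sum.inl v) ≠ 0 := by
      intro v h0
      have hmem : ccol Q (v, 2) ∈ span F (bcol Q '' {w : V | w ≠ v}) := by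
        refine mem_span_of_repr_vanish B hBinl (fun j hj => ?_)
        rcases j with w | i
        · have hwv : w = v := by
            by_contra hwv
            exact hj ⟨w, hwv, rfl⟩
          subst hwv; exact h0
        · exact hinr0 _ _
      have h2 := key 2 {w | w ≠ v} {v} (hsub4 v)
      rw [Set.image_singleton, rankZ4 A hdiag v] at h2
      have hle : span F (bcol Q '' {w : V | w ≠ v} ∪ {ccol Q (v, 2)}) ≤
          span F (bcol Q '' {w : V | w ≠ v}) :=
        span_le.mpr (Set.union_subset subset_span (Set.singleton_subset_iff.mpr hmem))
      have h4 := Submodule.finrank_mono hle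
      have h5 : finrank F (span F (bcol Q '' {w : V | w ≠ v})) =
          Fintype.card ↥{w : V | w ≠ v} := finrank_span_image hb _
      have h6 := card1 v
      omega
    refine ⟨?_, ?_, ?_⟩
    · intro i u
      show B.repr ((if (2 : Fin 3) = 2 then ddef (B.repr (ccol Q (u, 2)) (Sum.inl u))
        else 1) • ccol Q (u, 2)) (Sum.inr i) = 0
      rw [if_pos rfl, _root_.map_smul, Finsupp.smul_apply, hinr0, smul_zero]
    · intro v
      show B.repr ((if (2 : Fin 3) = 2 then ddef (B.repr (ccol Q (v, 2)) (Sum.inl v))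
        else 1) • ccol Q (v, 2)) (Sum.inl v) = 1
      rw [if_pos rfl, _root_.map_smul, Finsupp.smul_apply, smul_eq_mul]
      exact ddef_mul (hdel v)
    · intro v u hA1
      have hvu : v ≠ u := by
        rintro rfl
        rw [hdiag v] at hA1
        exact absurd hA1 (by decide)
      have hA2 : A u v = 1 := by
        rw [hsym.apply v u]
        exact hA1
      show B.repr ((if (2 : Fin 3) = 2 then ddef (B.repr (ccol Q (u, 2)) (Sum.inl u))
          else 1) • ccol Q (u, 2)) (Sum.inl v) *
        B.repr ((if (2 : Fin 3) = 2 then ddef (B.repr (ccol Q (v, 2)) (Sum.inl v))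
          else 1) • ccol Q (v, 2)) (Sum.inl u) = 1
      rw [if_pos rfl, if_pos rfl, _root_.map_smul, _root_.map_smul, Finsupp.smul_apply,
        Finsupp.smul_apply, smul_eq_mul, smul_eq_mul]
      have h2 := key 2 {w | w ≠ v ∧ w ≠ u} {v, u} (hsub5 v u)
      rw [Set.image_insert_eq, Set.image_singleton] at h2
      have h3 := rankZ5 A hdiag v u hvu hA1 hA2
      have hdet := det_lemma B hBinl hvu (fun i => hinr0 (v, 2) i)
        (fun i => hinr0 (u, 2) i) (by omega) hr0
      rw [ddef_eq (hdel u), ddef_eq (hdel v)]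
      field_simp [hdel u, hdel v]
      linear_combination -hdet

end Z3Aux

/-- Standard form of a representation of `Z₃(G)`: an `m × 3n` matrix
`P = [[I, A, B], [0, 0, C]]` (rows indexed by `V ⊕ Fin t`, so `m = n + t ≥ n`)
which shelters `Z₃(G)`, with `A` supported exactly on the edges of `G`; in the
strict case moreover `C = 0`, `B` has unit diagonal, and `B_{vw} · B_{wv} = 1` for
every edge `vw` of `G`. -/
theorem Z3_standard_representation
    {V : Type} [Fintype V] [DecidableEq V] (A : Matrix V V (ZMod 2))
    (hsym : A.IsSymm) (hdiag : ∀ v, A v v = 0) (F : Type) [Field F] :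
    (Z3Rep F A →
      ∃ (t : ℕ) (P : Matrix (V ⊕ Fin t) (V × Fin 3) F),
        (∀ v u : V, P (Sum.inl v) (u, 0) = if v = u then 1 else 0) ∧
        (∀ (i : Fin t) (u : V), P (Sum.inr i) (u, 0) = 0) ∧
        (∀ (i : Fin t) (u : V), P (Sum.inr i) (u, 1) = 0) ∧
        (∀ v u : V, P (Sum.inl v) (u, 1) ≠ 0 ↔ A v u ≠ 0) ∧
        (∀ S : Set (V × Fin 3), Subtransversal3 S →
          colSpanRank F P S = colSpanRank (ZMod 2) (IASmat A) S)) ∧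
    (Z3RepStrict F A →
      ∃ (t : ℕ) (P : Matrix (V ⊕ Fin t) (V × Fin 3) F),
        (∀ v u : V, P (Sum.inl v) (u, 0) = if v = u then 1 else 0) ∧
        (∀ (i : Fin t) (u : V), P (Sum.inr i) (u, 0) = 0) ∧
        (∀ (i : Fin t) (u : V), P (Sum.inr i) (u, 1) = 0) ∧
        (∀ v u : V, P (Sum.inl v) (u, 1) ≠ 0 ↔ A v u ≠ 0) ∧
        (∀ S : Set (V × Fin 3), Subtransversal3 S →
          colSpanRank F P S = colSpanRank (ZMod 2) (IASmat A) S) ∧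
        (∀ (i : Fin t) (u : V), P (Sum.inr i) (u, 2) = 0) ∧
        (∀ v : V, P (Sum.inl v) (v, 2) = 1) ∧
        (∀ v u : V, A v u = 1 → P (Sum.inl v) (u, 2) * P (Sum.inl u) (v, 2) = 1)) := by
  constructor
  · rintro ⟨k, Q, hQ⟩
    obtain ⟨t, P, h1, h2, h3, h4, h5, _⟩ := Z3Aux.core A hsym hdiag F k Q hQ
    exact ⟨t, P, h1, h2, h3, h4, h5⟩
  · rintro ⟨k, Q, hrank, hQ⟩
    obtain ⟨t, P, h1, h2, h3, h4, h5, hstr⟩ := Z3Aux.core A hsym hdiag F k Q hQ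
    obtain ⟨h6, h7, h8⟩ := hstr hrank
    exact ⟨t, P, h1, h2, h3, h4, h5, h6, h7, h8⟩
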